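/- In the forcing $\mathcal{Q}$ of Section 2 (finite approximations to clubs $D_\alpha \subseteq \alpha$ for $\alpha \in S^2_1$ using intervals): for every condition $q$ with $\alpha \in X_q$, if a limit ordinal $\delta < \alpha$ is not of the form $\min(I)$ for any $I \in \mathcal{I}^q_\alpha$ but some $I \in \mathcal{I}^q_\alpha$ satisfies $\min(I) < \delta$, then there is an extension $q'$ of $q$ forcing that $D^{\dot G}_\alpha \cap \delta$ is bounded below $\delta$. Consequently, in the generic extension the set $D^G_\alpha = \{\min(I) : I \in \mathcal{I}^q_\alpha, q \in G, \alpha \in X_q\}$ is closed in $\alpha$. -/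

import Mathlib

noncomputable section

universe u

open Cardinal

/-- The first uncountable ordinal. -/
def omega1 : Ordinal := (aleph 1).ord

/-- The second uncountable ordinal. -/
def omega2 : Ordinal := (aleph 2).ord

/-- The order type of a set of ordinals: the unique ordinal `o` such that `A` is the image
of `Iio o` under a strictly monotone map (with junk value if no such `o` exists). -/
def OT (A : Set Ordinal.{u}) : Ordinal.{u} :=
  sInf {o : Ordinal.{u} | ∃ g : Ordinal.{u} → Ordinal.{u},
    StrictMonoOn g (Set.Iio o) ∧ g '' Set.Iio o = A}

/-- `C` is a club (closed and unbounded) subset of `κ`: all of its members are `< κ`, it is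
unbounded in `κ`, and it contains the supremum of each of its nonempty subsets bounded in `κ`. -/
def IsClubIn (C : Set Ordinal) (κ : Ordinal) : Prop :=
  (∀ x ∈ C, x < κ) ∧ (∀ α < κ, ∃ β ∈ C, α < β) ∧
  (∀ S : Set Ordinal, S ⊆ C → S.Nonempty → sSup S < κ → sSup S ∈ C)

/-- `S` is a stationary subset of `κ`: it meets every club of `κ`. -/
def IsStationaryIn (S : Set Ordinal) (κ : Ordinal) : Prop :=
  (∀ x ∈ S, x < κ) ∧ ∀ C, IsClubIn C κ → (S ∩ C).Nonempty

/-- A condition of the forcing `𝒬` of Section 2 (its interval part): a finite set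
`X ⊆ S²₁ = {α < ω₂ : cf α = ω₁}` and, for each `α ∈ X`, a finite collection `I α` of
pairwise disjoint half-open intervals `[γ₀, γ₁)` (coded as pairs `(γ₀, γ₁)`) with
`γ₀ < γ₁ < α`. -/
structure IntCond where
  X : Finset Ordinal
  I : Ordinal → Finset (Ordinal × Ordinal)
  hX : ∀ α ∈ X, α < omega2 ∧ α.cof = Cardinal.aleph 1
  hI : ∀ α ∈ X, ∀ p ∈ I α, p.1 < p.2 ∧ p.2 < α
  hdisj : ∀ α ∈ X, ∀ p ∈ I α, ∀ p' ∈ I α, p ≠ p' → p.2 ≤ p'.1 ∨ p'.2 ≤ p.1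
  hempty : ∀ α, α ∉ X → I α = ∅

/-- `q₁` extends `q₀`: `X` grows, and every interval of `q₀` grows to the right into an
interval of `q₁` with the same left endpoint. -/
def IntExt (q₁ q₀ : IntCond) : Prop :=
  q₀.X ⊆ q₁.X ∧ ∀ α ∈ q₀.X, ∀ p ∈ q₀.I α, ∃ p' ∈ q₁.I α, p'.1 = p.1 ∧ p.2 ≤ p'.2

/-- The left endpoints at `α` decided by a filter `G`. -/
def DG (G : Set IntCond) (α : Ordinal) : Set Ordinal :=
  {γ | ∃ q ∈ G, α ∈ q.X ∧ ∃ p ∈ q.I α, p.1 = γ}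

/-- Lemma 2.14: if `q` is a condition, `α ∈ X_q`, and `δ < α` is a limit ordinal which is
not a left endpoint of any interval of `𝒥^q_α` while some interval of `𝒥^q_α` has left
endpoint below `δ`, then some extension `q'` of `q` forces `D^Ġ_α ∩ δ` to be bounded below
`δ`; consequently, for any (sufficiently) generic filter `G`, the set `D^G_α` of decided
left endpoints is closed in `α`. -/
lemma IntExt_refl (q : IntCond) : IntExt q q :=
  ⟨Finset.Subset.refl _, fun _ _ p hp => ⟨p, hp, rfl, le_rfl⟩⟩

lemma part1 : ∀ q : IntCond, ∀ α ∈ q.X, ∀ δ : Ordinal, δ < α → Order.IsSuccLimit δ →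
      (∀ p ∈ q.I α, p.1 ≠ δ) → (∃ p ∈ q.I α, p.1 < δ) →
      ∃ q' : IntCond, IntExt q' q ∧ ∃ β < δ,
        ∀ q'' : IntCond, IntExt q'' q' → ∀ p ∈ q''.I α, p.1 < δ → p.1 ≤ β := by
  classical
  intro q α hα δ hδα _hlim hne hex
  obtain ⟨p, hpS, hmax⟩ := Finset.exists_max_image
    ((q.I α).filter (fun x => x.1 < δ)) (fun x => x.1)
    (by obtain ⟨p, hp, h⟩ := hex; exact ⟨p, Finset.mem_filter.2 ⟨hp, h⟩⟩)
  obtain ⟨hp, hpδ⟩ := Finset.mem_filter.1 hpS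
  set δ' : Ordinal := max p.2 δ with hδ'
  set phat : Ordinal × Ordinal := (p.1, δ') with hphat
  -- key disjointness fact
  have key : ∀ p' ∈ q.I α, p' ≠ p → p'.2 ≤ p.1 ∨ δ' ≤ p'.1 := by
    intro p' hp' hne'
    rcases q.hdisj α hα p hp p' hp' (fun e => hne' e.symm) with h | h
    · right
      refine max_le h ?_
      by_contra hlt
      push_neg at hlt
      have := hmax p' (Finset.mem_filter.2 ⟨hp', hlt⟩)
      exact absurd ((q.hI α hα p hp).1.trans_le h) (not_lt.2 this)
    · left; exact h
  refine ⟨⟨q.X, fun b => if b = α then insert phat ((q.I α).erase p) else q.I b,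
    q.hX, ?_, ?_, ?_⟩, ⟨?_, ?_⟩, p.1, hpδ, ?_⟩
  · -- hI
    intro b hb r hr
    by_cases hbα : b = α
    · subst hbα
      rw [if_pos rfl] at hr
      rcases Finset.mem_insert.1 hr with h | h
      · subst h
        exact ⟨lt_max_of_lt_left (q.hI b hα p hp).1,
          max_lt (q.hI b hα p hp).2 hδα⟩
      · exact q.hI b hα r (Finset.mem_of_mem_erase h)
    · rw [if_neg hbα] at hr; exact q.hI b hb r hr
  · -- hdisj
    intro b hb r hr r' hr' hrr
    by_cases hbα : b = α
    · subst hbα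
      rw [if_pos rfl] at hr hr'
      rcases Finset.mem_insert.1 hr with h1 | h1 <;>
        rcases Finset.mem_insert.1 hr' with h2 | h2
      · exact absurd (h1.trans h2.symm) hrr
      · subst h1
        rcases key r' (Finset.mem_of_mem_erase h2) (Finset.ne_of_mem_erase h2) with h | h
        · right; exact h
        · left; exact h
      · subst h2
        rcases key r (Finset.mem_of_mem_erase h1) (Finset.ne_of_mem_erase h1) with h | h
        · left; exact h
        · right; exact h
      · exact q.hdisj b hα r (Finset.mem_of_mem_erase h1) r' (Finset.mem_of_mem_erase h2) hrr
    · rw [if_neg hbα] at hr hr'; exact q.hdisj b hb r hr r' hr' hrr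
  · -- hempty
    intro b hb
    have hbα : b ≠ α := fun e => hb (e ▸ hα)
    rw [if_neg hbα]; exact q.hempty b hb
  · exact Finset.Subset.refl _
  · -- extension of intervals
    intro b hb r hr
    by_cases hbα : b = α
    · subst hbα
      by_cases hrp : r = p
      · subst hrp
        exact ⟨phat, by dsimp only; rw [if_pos rfl]; exact Finset.mem_insert_self _ _, rfl, le_max_left _ _⟩
      · exact ⟨r, by dsimp only; rw [if_pos rfl]; exact Finset.mem_insert_of_mem (Finset.mem_erase.2 ⟨hrp, hr⟩), rfl, le_rfl⟩
    · exact ⟨r, by dsimp only; rw [if_neg hbα]; exact hr, rfl, le_rfl⟩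
  · -- the forcing property
    intro q'' hext r hr hrδ
    have hαX'' : α ∈ q''.X := hext.1 hα
    obtain ⟨pstar, hpstar, hps1, hps2⟩ := hext.2 α hα phat
      (by dsimp only; rw [if_pos rfl]; exact Finset.mem_insert_self _ _)
    have hδps : δ ≤ pstar.2 := le_trans (le_max_right p.2 δ) hps2
    by_cases hrp : r = pstar
    · subst hrp; rw [hps1]
    · rcases q''.hdisj α hαX'' r hr pstar hpstar hrp with h | h
      · exact le_trans (le_of_lt (q''.hI α hαX'' r hr).1) (h.trans_eq hps1)
      · exact absurd (lt_of_lt_of_le hrδ (hδps.trans h)) (lt_irrefl _)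

lemma part2 : (∀ G : Set IntCond,
      (∀ q₁ ∈ G, ∀ q₂ ∈ G, ∃ q₃ ∈ G, IntExt q₃ q₁ ∧ IntExt q₃ q₂) →
      (∀ q ∈ G, ∀ r : IntCond, IntExt q r → r ∈ G) →
      (∀ D : Set IntCond, (∀ q : IntCond, ∃ q' ∈ D, IntExt q' q) → (G ∩ D).Nonempty) →
      ∀ α δ : Ordinal, δ < α → Order.IsSuccLimit δ →
        (∀ β < δ, ∃ γ ∈ DG G α, β < γ ∧ γ < δ) → δ ∈ DG G α) := by
  classical
  intro G hdir _hup hgen α δ hδα hlim hub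
  set D : Set IntCond := {q' | (∃ p ∈ q'.I α, p.1 = δ) ∨
    (∃ β < δ, ∀ q'', IntExt q'' q' → ∀ p ∈ q''.I α, p.1 < δ → p.1 ≤ β)} with hD
  have hdense : ∀ q : IntCond, ∃ q' ∈ D, IntExt q' q := by
    intro q
    by_cases hS : α < omega2 ∧ α.cof = Cardinal.aleph 1
    · by_cases h1 : ∃ p ∈ q.I α, p.1 = δ
      · exact ⟨q, Or.inl h1, IntExt_refl q⟩
      · by_cases h2 : ∃ p ∈ q.I α, p.1 < δ
        · have hαX : α ∈ q.X := by
            by_contra h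
            obtain ⟨p, hp, _⟩ := h2
            rw [q.hempty α h] at hp
            exact absurd hp (Finset.notMem_empty _)
          obtain ⟨q', hext, β, hβ, hf⟩ := part1 q α hαX δ hδα hlim
            (fun p hp e => h1 ⟨p, hp, e⟩) h2
          exact ⟨q', Or.inr ⟨β, hβ, hf⟩, hext⟩
        · -- every interval at α has left endpoint > δ
          have h3 : ∀ p ∈ q.I α, δ < p.1 := by
            intro p hp
            refine lt_of_le_of_ne (not_lt.1 fun h => h2 ⟨p, hp, h⟩) ?_
            exact fun e => h1 ⟨p, hp, e.symm⟩
          have hIα : ∀ p ∈ q.I α, p.1 < p.2 ∧ p.2 < α := by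
            by_cases h : α ∈ q.X
            · exact q.hI α h
            · intro p hp; rw [q.hempty α h] at hp
              exact absurd hp (Finset.notMem_empty _)
          have hDα : ∀ p ∈ q.I α, ∀ p' ∈ q.I α, p ≠ p' → p.2 ≤ p'.1 ∨ p'.2 ≤ p.1 := by
            by_cases h : α ∈ q.X
            · exact q.hdisj α h
            · intro p hp; rw [q.hempty α h] at hp
              exact absurd hp (Finset.notMem_empty _)
          have hsucc : Order.succ δ < α := by
            rcases lt_or_eq_of_le (Order.succ_le_of_lt hδα) with h | h
            · exact h
            · exfalso
              have hc := Ordinal.cof_succ δ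
              rw [h, hS.2] at hc
              exact absurd hc.symm (ne_of_lt (one_lt_aleph0.trans_le (aleph0_le_aleph 1)))
          set pδ : Ordinal × Ordinal := (δ, Order.succ δ) with hpδ
          have hpδnotmem : pδ ∉ q.I α := fun h => absurd (h3 pδ h) (lt_irrefl δ)
          refine ⟨⟨insert α q.X, fun b => if b = α then insert pδ (q.I α) else q.I b,
            ?_, ?_, ?_, ?_⟩, Or.inl ⟨pδ, ?_, rfl⟩, ?_, ?_⟩
          · intro b hb
            rcases Finset.mem_insert.1 hb with h | h
            · exact h ▸ hS
            · exact q.hX b h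
          · intro b hb r hr
            by_cases hbα : b = α
            · subst hbα
              rw [if_pos rfl] at hr
              rcases Finset.mem_insert.1 hr with h | h
              · subst h; exact ⟨Order.lt_succ δ, hsucc⟩
              · exact hIα r h
            · rw [if_neg hbα] at hr
              exact q.hI b (Finset.mem_insert.1 hb |>.resolve_left hbα) r hr
          · intro b hb r hr r' hr' hrr
            by_cases hbα : b = α
            · subst hbα
              rw [if_pos rfl] at hr hr'
              rcases Finset.mem_insert.1 hr with h1 | h1 <;>
                rcases Finset.mem_insert.1 hr' with h2 | h2
              · exact absurd (h1.trans h2.symm) hrr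
              · subst h1; left; exact Order.succ_le_of_lt (h3 r' h2)
              · subst h2; right; exact Order.succ_le_of_lt (h3 r h1)
              · exact hDα r h1 r' h2 hrr
            · rw [if_neg hbα] at hr hr'
              exact q.hdisj b (Finset.mem_insert.1 hb |>.resolve_left hbα) r hr r' hr' hrr
          · intro b hb
            have hbα : b ≠ α := fun e => hb (e ▸ Finset.mem_insert_self α q.X)
            rw [if_neg hbα]
            exact q.hempty b (fun h => hb (Finset.mem_insert_of_mem h))
          · dsimp only; rw [if_pos rfl]; exact Finset.mem_insert_self _ _
          · exact Finset.subset_insert α q.X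
          · intro b hb r hr
            by_cases hbα : b = α
            · subst hbα
              exact ⟨r, by dsimp only; rw [if_pos rfl]; exact Finset.mem_insert_of_mem hr, rfl, le_rfl⟩
            · exact ⟨r, by dsimp only; rw [if_neg hbα]; exact hr, rfl, le_rfl⟩
    · refine ⟨q, Or.inr ⟨0, hlim.pos, ?_⟩, IntExt_refl q⟩
      intro q'' _ p hp _
      have hα : α ∉ q''.X := fun h => hS (q''.hX α h)
      rw [q''.hempty α hα] at hp
      exact absurd hp (Finset.notMem_empty _)
  obtain ⟨q', hq'G, hq'D⟩ := hgen D hdense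
  rcases hq'D with ⟨p, hp, hp1⟩ | ⟨β, hβ, hforce⟩
  · have hαX : α ∈ q'.X := by
      by_contra h
      rw [q'.hempty α h] at hp
      exact absurd hp (Finset.notMem_empty _)
    exact ⟨q', hq'G, hαX, p, hp, hp1⟩
  · exfalso
    obtain ⟨γ, hγDG, hβγ, hγδ⟩ := hub β hβ
    obtain ⟨r, hrG, hrX, pr, hpr, hpr1⟩ := hγDG
    obtain ⟨q₃, hq₃G, h31, h32⟩ := hdir q' hq'G r hrG
    obtain ⟨ps, hps, hps1, _⟩ := h32.2 α hrX pr hpr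
    have h := hforce q₃ h31 ps hps (by rw [hps1, hpr1]; exact hγδ)
    rw [hps1, hpr1] at h
    exact absurd h (not_le.2 hβγ)

theorem stmt18 :
    (∀ q : IntCond, ∀ α ∈ q.X, ∀ δ : Ordinal, δ < α → Order.IsSuccLimit δ →
      (∀ p ∈ q.I α, p.1 ≠ δ) → (∃ p ∈ q.I α, p.1 < δ) →
      ∃ q' : IntCond, IntExt q' q ∧ ∃ β < δ,
        ∀ q'' : IntCond, IntExt q'' q' → ∀ p ∈ q''.I α, p.1 < δ → p.1 ≤ β) ∧
    (∀ G : Set IntCond,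
      (∀ q₁ ∈ G, ∀ q₂ ∈ G, ∃ q₃ ∈ G, IntExt q₃ q₁ ∧ IntExt q₃ q₂) →
      (∀ q ∈ G, ∀ r : IntCond, IntExt q r → r ∈ G) →
      (∀ D : Set IntCond, (∀ q : IntCond, ∃ q' ∈ D, IntExt q' q) → (G ∩ D).Nonempty) →
      ∀ α δ : Ordinal, δ < α → Order.IsSuccLimit δ →
        (∀ β < δ, ∃ γ ∈ DG G α, β < γ ∧ γ < δ) → δ ∈ DG G α) :=
  ⟨part1, part2⟩
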